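/- Assume a < b and 2r ≤ a². Then 𝒮 and 𝒫 are tangent at some point if and only if one of the following holds: (1) −a² is a root of the characteristic polynomial f of multiplicity at least 3; or (2) f has a real root λ ∉ {−a², −b²} of multiplicity at least 2. -/

import Mathlib

open Matrix Polynomial

/-- The 4×4 matrix of the elliptic paraboloid x²/a² + y²/b² - z = 0. -/
noncomputable def Pmat (a b : ℝ) : Matrix (Fin 4) (Fin 4) ℝ :=
  !![1/a^2, 0, 0, 0;
     0, 1/b^2, 0, 0;
     0, 0, 0, -(1/2 : ℝ);
     0, 0, -(1/2 : ℝ), 0]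

/-- The 4×4 matrix of the sphere (x-x_c)² + (y-y_c)² + (z-z_c)² = r². -/
noncomputable def Smat (xc yc zc r : ℝ) : Matrix (Fin 4) (Fin 4) ℝ :=
  !![1, 0, 0, -xc;
     0, 1, 0, -yc;
     0, 0, 1, -zc;
     -xc, -yc, -zc, xc^2 + yc^2 + zc^2 - r^2]

/-- The characteristic polynomial f(λ) = det(λP + S), as a real polynomial in λ. -/
noncomputable def charPoly (a b xc yc zc r : ℝ) : Polynomial ℝ :=
  Matrix.det ((X : Polynomial ℝ) • (Pmat a b).map C + (Smat xc yc zc r).map C)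

/-- The sphere and the paraboloid are tangent at the point (x,y,z):
with X = (x,y,z,1)ᵗ one has XᵗPX = 0, XᵗSX = 0 and for every Y,
YᵗPX = 0 iff YᵗSX = 0 (same tangent plane). -/
def TangentAt (a b xc yc zc r x y z : ℝ) : Prop :=
  ![x, y, z, 1] ⬝ᵥ (Pmat a b).mulVec ![x, y, z, 1] = 0 ∧
  ![x, y, z, 1] ⬝ᵥ (Smat xc yc zc r).mulVec ![x, y, z, 1] = 0 ∧
  ∀ Y : Fin 4 → ℝ,
    Y ⬝ᵥ (Pmat a b).mulVec ![x, y, z, 1] = 0 ↔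
    Y ⬝ᵥ (Smat xc yc zc r).mulVec ![x, y, z, 1] = 0

/-! ### Auxiliary functions: the values of f, f', f'' -/

/-- The value of the characteristic polynomial. -/
noncomputable def qev (a b xc yc zc r l : ℝ) : ℝ :=
  (l/a^2+1)*(l/b^2+1)*((xc^2+yc^2+zc^2-r^2) - (l/2+zc)^2)
    - (l/b^2+1)*xc^2 - (l/a^2+1)*yc^2

/-- The value of the derivative of the characteristic polynomial. -/
noncomputable def qev1 (a b xc yc zc r l : ℝ) : ℝ :=
  (1/a^2*(l/b^2+1) + (l/a^2+1)/b^2)*((xc^2+yc^2+zc^2-r^2) - (l/2+zc)^2)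
    - (l/a^2+1)*(l/b^2+1)*(l/2+zc) - xc^2/b^2 - yc^2/a^2

/-- The value of the second derivative of the characteristic polynomial. -/
noncomputable def qev2 (a b xc yc zc r l : ℝ) : ℝ :=
  2/(a^2*b^2)*((xc^2+yc^2+zc^2-r^2) - (l/2+zc)^2)
    - 2*(1/a^2*(l/b^2+1) + (l/a^2+1)/b^2)*(l/2+zc) - (l/a^2+1)*(l/b^2+1)/2

lemma charPoly_eq (a b xc yc zc r : ℝ) :
    charPoly a b xc yc zc r =
      C (-r^2)
      + C ((1/a^2+1/b^2)*(xc^2+yc^2-r^2) - zc - xc^2/b^2 - yc^2/a^2) * X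
      + C ((xc^2+yc^2-r^2)/(a^2*b^2) - (1/a^2+1/b^2)*zc - 1/4) * X^2
      + C (-(zc/(a^2*b^2)) - (1/a^2+1/b^2)/4) * X^3
      + C (-(1/(4*(a^2*b^2)))) * X^4 := by
  apply Polynomial.funext
  intro l
  rw [charPoly]
  simp [show ((2 : Fin 3).castSucc : Fin 4) = 2 from rfl, show (Fin.succAbove (3 : Fin 4) (2 : Fin 3)) = 2 from rfl, Matrix.det_succ_row_zero,
    Fin.sum_univ_succ, Pmat, Smat, Matrix.smul_apply, Matrix.map_apply, Matrix.add_apply,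
    smul_eq_mul]
  ring

lemma eval_charPoly (a b xc yc zc r l : ℝ) :
    (charPoly a b xc yc zc r).eval l = qev a b xc yc zc r l := by
  rw [charPoly_eq, qev]; simp; ring

lemma eval_d_charPoly (a b xc yc zc r l : ℝ) :
    ((charPoly a b xc yc zc r).derivative).eval l = qev1 a b xc yc zc r l := by
  rw [charPoly_eq, qev1]; simp [derivative_pow]; ring

lemma eval_dd_charPoly (a b xc yc zc r l : ℝ) :
    (((charPoly a b xc yc zc r).derivative).derivative).eval l = qev2 a b xc yc zc r l := by
  rw [charPoly_eq, qev2]; simp [derivative_pow]; ring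

lemma charPoly_ne_zero (a b xc yc zc r : ℝ) (hr : 0 < r) : charPoly a b xc yc zc r ≠ 0 := by
  intro h
  have := eval_charPoly a b xc yc zc r 0
  rw [h] at this
  simp [qev] at this
  nlinarith

lemma mult2_iff (a b xc yc zc r l : ℝ) (hr : 0 < r) :
    2 ≤ rootMultiplicity l (charPoly a b xc yc zc r) ↔
      qev a b xc yc zc r l = 0 ∧ qev1 a b xc yc zc r l = 0 := by
  have h := Polynomial.one_lt_rootMultiplicity_iff_isRoot
    (p := charPoly a b xc yc zc r) (t := l) (charPoly_ne_zero a b xc yc zc r hr)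
  rw [show (2 : ℕ) ≤ rootMultiplicity l (charPoly a b xc yc zc r) ↔
    1 < rootMultiplicity l (charPoly a b xc yc zc r) from Iff.rfl, h]
  unfold IsRoot
  rw [eval_charPoly, eval_d_charPoly]

lemma mult3_iff (a b xc yc zc r l : ℝ) (hr : 0 < r) :
    3 ≤ rootMultiplicity l (charPoly a b xc yc zc r) ↔
      qev a b xc yc zc r l = 0 ∧ qev1 a b xc yc zc r l = 0 ∧ qev2 a b xc yc zc r l = 0 := by
  have h := Polynomial.lt_rootMultiplicity_iff_isRoot_iterate_derivative_of_mem_nonZeroDivisors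
    (p := charPoly a b xc yc zc r) (t := l) (n := 2) (charPoly_ne_zero a b xc yc zc r hr)
    (by norm_num)
  rw [show (3 : ℕ) ≤ rootMultiplicity l (charPoly a b xc yc zc r) ↔
    2 < rootMultiplicity l (charPoly a b xc yc zc r) from Iff.rfl, h]
  constructor
  · intro hm
    refine ⟨?_, ?_, ?_⟩
    · have := hm 0 (by norm_num); simpa [IsRoot, eval_charPoly] using this
    · have := hm 1 (by norm_num); simpa [IsRoot, eval_d_charPoly] using this
    · have := hm 2 (by norm_num)
      rw [show (derivative^[2] (charPoly a b xc yc zc r)) =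
        ((charPoly a b xc yc zc r).derivative).derivative from rfl] at this
      simpa [IsRoot, eval_dd_charPoly] using this
  · rintro ⟨h0, h1, h2⟩ m hm
    interval_cases m
    · simpa [IsRoot, eval_charPoly] using h0
    · simpa [IsRoot, eval_d_charPoly] using h1
    · rw [show (derivative^[2] (charPoly a b xc yc zc r)) =
        ((charPoly a b xc yc zc r).derivative).derivative from rfl]
      simpa [IsRoot, eval_dd_charPoly] using h2

/-- Tangency at a point is equivalent to an explicit system of equations. -/
lemma tangent_iff_sys (a b r xc yc zc : ℝ) (hr : 0 < r) :
    (∃ x y z : ℝ, TangentAt a b xc yc zc r x y z) ↔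
    (∃ x y t : ℝ, xc = x*(1 - t/a^2) ∧ yc = y*(1 - t/b^2) ∧
      zc = x^2/a^2 + y^2/b^2 + t/2 ∧ r^2 = t^2*(x^2/a^4 + y^2/b^4 + 1/4)) := by
  constructor
  · rintro ⟨x, y, z, h1, h2, h3⟩
    simp [Pmat, Smat, Matrix.mulVec, dotProduct, Fin.sum_univ_four,
      Matrix.vecHead, Matrix.vecTail] at h1 h2 h3
    have h4 := (h3 ![-(1/2), 0, -(x/a^2), 0]).mp (by simp [Matrix.cons_val]; ring)
    have h5 := (h3 ![0, -(1/2), -(y/b^2), 0]).mp (by simp [Matrix.cons_val]; ring)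
    simp at h4 h5
    set t : ℝ := -2*(z - zc) with hts
    refine ⟨x, y, t, ?_, ?_, ?_, ?_⟩
    · linear_combination (2 : ℝ) * h4
    · linear_combination (2 : ℝ) * h5
    · linear_combination -h1
    · have hx' : x - xc = t*x/a^2 := by linear_combination (-2 : ℝ) * h4
      have hy' : y - yc = t*y/b^2 := by linear_combination (-2 : ℝ) * h5
      have hz' : z - zc = -t/2 := by rw [hts]; ring
      calc r^2 = (x-xc)^2 + (y-yc)^2 + (z-zc)^2 := by linear_combination -h2
        _ = (t*x/a^2)^2 + (t*y/b^2)^2 + (-t/2)^2 := by rw [hx', hy', hz']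
        _ = t^2*(x^2/a^4 + y^2/b^4 + 1/4) := by ring
  · rintro ⟨x, y, t, e1, e2, e3, e4⟩
    have ht : t ≠ 0 := by
      rintro rfl
      simp at e4
      nlinarith
    refine ⟨x, y, x^2/a^2 + y^2/b^2, ?_, ?_, ?_⟩
    · simp [Pmat, Matrix.mulVec, dotProduct, Fin.sum_univ_four,
        Matrix.vecHead, Matrix.vecTail]
      ring
    · simp [Smat, Matrix.mulVec, dotProduct, Fin.sum_univ_four,
        Matrix.vecHead, Matrix.vecTail]
      subst e1 e2 e3
      linear_combination -e4
    · intro Y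
      simp [Pmat, Smat, Matrix.mulVec, dotProduct, Fin.sum_univ_four,
        Matrix.vecHead, Matrix.vecTail]
      have key : Y 0 * (x + -xc) + Y 1 * (y + -yc) + Y 2 * ((x^2/a^2 + y^2/b^2) + -zc) +
            Y 3 * (-(xc * x) + -(yc * y) + -(zc * (x^2/a^2 + y^2/b^2)) +
              (xc ^ 2 + yc ^ 2 + zc ^ 2 - r ^ 2)) =
          t * (Y 0 * ((a ^ 2)⁻¹ * x) + Y 1 * ((b ^ 2)⁻¹ * y) + -(Y 2 * 2⁻¹) +
            -(Y 3 * (2⁻¹ * (x^2/a^2 + y^2/b^2)))) := by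
        subst e1 e2 e3
        linear_combination (-(Y 3)) * e4
      constructor
      · intro h
        rw [key, h, mul_zero]
      · intro h
        rw [key] at h
        rcases mul_eq_zero.mp h with h' | h'
        · exact absurd h' ht
        · exact h'

set_option maxHeartbeats 1000000 in
/-- From a triple root at -a² recover the special configuration. -/
lemma caseC (a b r xc yc zc : ℝ) (ha : 0 < a) (hab : a < b) (hr : 0 < r) (hsmall : 2*r ≤ a^2)
    (hq0 : qev a b xc yc zc r (-a^2) = 0)
    (hq1 : qev1 a b xc yc zc r (-a^2) = 0)
    (hq2 : qev2 a b xc yc zc r (-a^2) = 0) :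
    xc = 0 ∧ yc = 0 ∧ zc = a^2/2 ∧ r^2 = a^4/4 := by
  have hb : 0 < b := lt_trans ha hab
  have ha' : (a:ℝ) ≠ 0 := ne_of_gt ha
  have hb' : (b:ℝ) ≠ 0 := ne_of_gt hb
  have hba : a^2 < b^2 := by nlinarith
  have key0 : b^2 * qev a b xc yc zc r (-a^2) = -((b^2 - a^2) * xc^2) := by
    simp only [qev]; field_simp; ring
  have hxc : xc = 0 := by
    rw [hq0, mul_zero] at key0
    have : xc^2 = 0 := by
      have h1 : (b^2 - a^2) * xc^2 = 0 := by linarith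
      rcases mul_eq_zero.mp h1 with h | h
      · nlinarith
      · exact h
    exact pow_eq_zero_iff (n := 2) (by norm_num) |>.mp this
  subst hxc
  have key1 : a^2*b^2 * qev1 a b 0 yc zc r (-a^2) =
      (b^2 - a^2) * ((yc^2+zc^2-r^2) - (zc-a^2/2)^2) - b^2*yc^2 := by
    simp only [qev1]; field_simp; ring
  have key2 : a^2*b^2 * qev2 a b 0 yc zc r (-a^2) =
      2*((yc^2+zc^2-r^2) - (zc-a^2/2)^2) - 2*(b^2 - a^2)*(zc - a^2/2) := by
    simp only [qev2]; field_simp; ring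
  rw [hq1, mul_zero] at key1
  rw [hq2, mul_zero] at key2
  have hE1 : (b^2 - a^2) * ((yc^2+zc^2-r^2) - (zc-a^2/2)^2) = b^2*yc^2 := by linarith
  have hE2 : ((yc^2+zc^2-r^2) - (zc-a^2/2)^2) = (b^2 - a^2)*(zc - a^2/2) := by linarith
  have hu2 : (b^2-a^2)^2*(zc - a^2/2) = b^2*yc^2 := by
    linear_combination hE1 - (b^2-a^2)*hE2
  have hkey : b^2*(r^2 - a^4/4) = a^4*(zc - a^2/2) := by
    linear_combination -hu2 - b^2*hE2
  have hbb : 0 < b^2 - a^2 := by nlinarith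
  have hun : 0 ≤ zc - a^2/2 := by
    rcases le_or_gt 0 (zc - a^2/2) with h | h
    · exact h
    · exfalso
      have h1 : (b^2-a^2)^2*(zc - a^2/2) < 0 := mul_neg_of_pos_of_neg (pow_pos hbb 2) h
      have h2 : 0 ≤ b^2*yc^2 := mul_nonneg (le_of_lt (pow_pos hb 2)) (sq_nonneg yc)
      linarith
  have hsm : r^2 ≤ a^4/4 := by nlinarith [sq_nonneg (a^2 - 2*r)]
  have hup : zc - a^2/2 ≤ 0 := by
    rcases le_or_gt (zc - a^2/2) 0 with h | h
    · exact h
    · exfalso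
      have h1 : 0 < a^4*(zc-a^2/2) := mul_pos (pow_pos ha 4) h
      have h2 : b^2*(r^2-a^4/4) ≤ 0 :=
        mul_nonpos_of_nonneg_of_nonpos (le_of_lt (pow_pos hb 2)) (by linarith)
      linarith
  have hu0 : zc - a^2/2 = 0 := le_antisymm hup hun
  have hzc : zc = a^2/2 := by linarith
  have hr2 : r^2 = a^4/4 := by
    have h1 : b^2*(r^2 - a^4/4) = 0 := by rw [hkey, hu0, mul_zero]
    rcases mul_eq_zero.mp h1 with h | h
    · exact absurd h (ne_of_gt (pow_pos hb 2))
    · linarith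
  have hyc : yc = 0 := by
    have h1 : b^2*yc^2 = 0 := by rw [← hu2, hu0, mul_zero]
    have : yc^2 = 0 := by
      rcases mul_eq_zero.mp h1 with h | h
      · exact absurd h (ne_of_gt (pow_pos hb 2))
      · exact h
    exact pow_eq_zero_iff (n := 2) (by norm_num) |>.mp this
  exact ⟨rfl, hyc, hzc, hr2⟩

set_option maxHeartbeats 1000000 in
/-- From a double root away from -a², -b² recover a solution of the system. -/
lemma caseD (a b r xc yc zc l : ℝ) (ha : 0 < a) (hab : a < b) (hr : 0 < r)
    (hl1 : l ≠ -a^2) (hl2 : l ≠ -b^2)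
    (hq : qev a b xc yc zc r l = 0) (hq1 : qev1 a b xc yc zc r l = 0) :
    ∃ x y t : ℝ, xc = x*(1 - t/a^2) ∧ yc = y*(1 - t/b^2) ∧
      zc = x^2/a^2 + y^2/b^2 + t/2 ∧ r^2 = t^2*(x^2/a^4 + y^2/b^4 + 1/4) := by
  have hb : 0 < b := lt_trans ha hab
  have ha' : (a:ℝ) ≠ 0 := ne_of_gt ha
  have hb' : (b:ℝ) ≠ 0 := ne_of_gt hb
  have hW : l + a^2 ≠ 0 := fun h => hl1 (by linarith)
  have hV : l + b^2 ≠ 0 := fun h => hl2 (by linarith)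
  have keyG : a^2*b^2 * qev a b xc yc zc r l =
      (l+a^2)*(l+b^2)*((xc^2+yc^2+zc^2-r^2) - (l/2+zc)^2)
        - a^2*xc^2*(l+b^2) - b^2*yc^2*(l+a^2) := by
    simp only [qev]; field_simp
  have keyG1 : a^2*b^2 * qev1 a b xc yc zc r l =
      ((l+a^2)+(l+b^2))*((xc^2+yc^2+zc^2-r^2) - (l/2+zc)^2)
        - (l+a^2)*(l+b^2)*(l/2+zc) - a^2*xc^2 - b^2*yc^2 := by
    simp only [qev1]; field_simp; ring
  rw [hq, mul_zero] at keyG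
  rw [hq1, mul_zero] at keyG1
  have hG : (l+a^2)*(l+b^2)*((xc^2+yc^2+zc^2-r^2) - (l/2+zc)^2)
      - a^2*xc^2*(l+b^2) - b^2*yc^2*(l+a^2) = 0 := by linarith
  have hG1 : ((l+a^2)+(l+b^2))*((xc^2+yc^2+zc^2-r^2) - (l/2+zc)^2)
      - (l+a^2)*(l+b^2)*(l/2+zc) - a^2*xc^2 - b^2*yc^2 = 0 := by linarith
  have hFF1 : -(l/2+zc)*(l+a^2)^2*(l+b^2)^2 + a^2*xc^2*(l+b^2)^2 + b^2*yc^2*(l+a^2)^2 = 0 := by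
    linear_combination ((l+a^2)*(l+b^2))*hG1 - ((l+a^2)+(l+b^2))*hG
  have hE4 : l^2*xc^2*(l+b^2)^2 + l^2*yc^2*(l+a^2)^2
      + (l+a^2)^2*(l+b^2)^2*(l^2/4 - r^2) = 0 := by
    linear_combination ((l+a^2)*(l+b^2))*hG - l*hFF1
  have hWa : a^2*l + a^4 ≠ 0 := by
    intro h
    apply hW
    have h2 : a^2*(l+a^2) = 0 := by linear_combination h
    rcases mul_eq_zero.mp h2 with h3 | h3
    · exact absurd h3 (pow_ne_zero 2 ha')
    · exact h3
  have hVb : b^2*l + b^4 ≠ 0 := by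
    intro h
    apply hV
    have h2 : b^2*(l+b^2) = 0 := by linear_combination h
    rcases mul_eq_zero.mp h2 with h3 | h3
    · exact absurd h3 (pow_ne_zero 2 hb')
    · exact h3
  have hW' : a^2 + l ≠ 0 := fun h => hW (by linarith)
  have hV' : b^2 + l ≠ 0 := fun h => hV (by linarith)
  refine ⟨a^2*xc/(a^2+l), b^2*yc/(b^2+l), -l, ?_, ?_, ?_, ?_⟩
  · field_simp [hWa, hW']
    ring
  · field_simp [hVb, hV']
    ring
  · field_simp [hW', hV', hWa, hVb]
    linear_combination (-2) * hFF1
  · field_simp [hW', hV', hWa, hVb]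
    linear_combination (-4) * hE4

set_option maxHeartbeats 4000000 in
/-- (a < b, smallness) tangency characterized by the root
configuration: either -a² is a root of multiplicity ≥ 3, or f has a multiple
real root different from -a² and -b². -/
theorem tangent_iff_root_configuration (a b r xc yc zc : ℝ)
    (ha : 0 < a) (hab : a < b) (hr : 0 < r) (hsmall : 2*r ≤ a^2) :
    (∃ x y z : ℝ, TangentAt a b xc yc zc r x y z) ↔
      (3 ≤ rootMultiplicity (-a^2) (charPoly a b xc yc zc r) ∨
       ∃ l : ℝ, l ≠ -a^2 ∧ l ≠ -b^2 ∧ (charPoly a b xc yc zc r).IsRoot l ∧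
         2 ≤ rootMultiplicity l (charPoly a b xc yc zc r)) := by
  have hb : 0 < b := lt_trans ha hab
  have ha' : (a:ℝ) ≠ 0 := ne_of_gt ha
  have hb' : (b:ℝ) ≠ 0 := ne_of_gt hb
  rw [tangent_iff_sys a b r xc yc zc hr]
  constructor
  · rintro ⟨x, y, t, e1, e2, e3, e4⟩
    by_cases ht : t = a^2
    · -- tangency at the vertex: triple root at -a²
      left
      subst ht
      have hone : (1 : ℝ) - a^2/a^2 = 0 := by field_simp; ring
      have hxc : xc = 0 := by rw [e1, hone, mul_zero]
      have e4' : r^2 = x^2 + a^4*y^2/b^4 + a^4/4 := by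
        rw [e4]; field_simp
      have hsm : r^2 ≤ a^4/4 := by nlinarith [sq_nonneg (a^2 - 2*r)]
      have hy4 : 0 ≤ a^4*y^2/b^4 := by positivity
      have hx : x = 0 := by nlinarith [sq_nonneg x, sq_nonneg y]
      have hy : y = 0 := by
        have h1 : a^4*y^2/b^4 ≤ 0 := by nlinarith [sq_nonneg x]
        have hy2 : y^2 = 0 := by
          by_contra h
          have h2 : 0 < y^2 := lt_of_le_of_ne (sq_nonneg y) (Ne.symm h)
          have : 0 < a^4*y^2/b^4 := by positivity
          linarith
        exact pow_eq_zero_iff (n := 2) (by norm_num) |>.mp hy2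
      have hyc : yc = 0 := by rw [e2, hy, zero_mul]
      have hzc : zc = a^2/2 := by rw [e3, hx, hy]; norm_num
      have hr2 : r^2 = a^4/4 := by
        rw [e4', hx, hy]; norm_num
      rw [mult3_iff a b xc yc zc r (-a^2) hr, hxc, hyc, hzc]
      refine ⟨?_, ?_, ?_⟩ <;> simp only [qev, qev1, qev2] <;> rw [hr2] <;> field_simp <;> ring
    · -- double root at -t ∉ {-a², -b²}
      right
      refine ⟨-t, ?_, ?_, ?_, ?_⟩
      · -- t ≠ a²
        intro h
        exact ht (by linarith)
      · -- t ≠ b²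
        intro h
        have htb : t = b^2 := by linarith
        have hSig : 0 ≤ x^2/a^4 + y^2/b^4 := by positivity
        have h1 : t^2/4 ≤ r^2 := by nlinarith [mul_nonneg (sq_nonneg t) hSig]
        have h2 : t^2 ≤ a^4 := by nlinarith [sq_nonneg (a^2 - 2*r)]
        have hba2 : a^2 < b^2 := by nlinarith
        have h3 : a^4 < b^4 := by nlinarith [pow_pos ha 2, pow_pos hb 2]
        have h4 : t^2 = b^4 := by rw [htb]; ring
        linarith
      · rw [Polynomial.IsRoot.def, eval_charPoly]
        subst e1 e2 e3
        simp only [qev]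
        linear_combination (-((-t)/a^2+1)*((-t)/b^2+1))*e4
      · rw [mult2_iff a b xc yc zc r (-t) hr]
        subst e1 e2 e3
        constructor
        · simp only [qev]
          linear_combination (-((-t)/a^2+1)*((-t)/b^2+1))*e4
        · simp only [qev1]
          linear_combination (-(1/a^2*((-t)/b^2+1) + ((-t)/a^2+1)/b^2))*e4
  · rintro (h3 | ⟨l, hl1, hl2, _, h2⟩)
    · rw [mult3_iff a b xc yc zc r (-a^2) hr] at h3
      obtain ⟨hq0, hq1, hq2⟩ := h3
      obtain ⟨hxc, hyc, hzc, hr2⟩ := caseC a b r xc yc zc ha hab hr hsmall hq0 hq1 hq2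
      refine ⟨0, 0, a^2, ?_, ?_, ?_, ?_⟩
      · rw [hxc]; ring
      · rw [hyc]; ring
      · rw [hzc]; norm_num
      · rw [hr2]; norm_num; ring
    · rw [mult2_iff a b xc yc zc r l hr] at h2
      exact caseD a b r xc yc zc l ha hab hr hl1 hl2 h2.1 h2.2
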